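/- Let A be the p×p companion matrix with last row (a_p,...,a_1) and spectral radius < 1. If e_p^T (I - A)^{-1} e_p = 0, then there exist c_1,...,c_{p-1} ∈ ℝ with e_p = (I - A) (c_1,...,c_{p-1},0)^T; examining the entries successively forces c_{p-1} = ... = c_1 = 0, a contradiction. Hence e_p^T (I - A)^{-1} e_p ≠ 0. -/

import Mathlib

/-- Companion matrix with ones on the superdiagonal and last row
`(a_p, a_{p-1}, ..., a_1)`, where `a k` stands for `a_{k+1}`. -/
def companion (p : ℕ) (a : ℕ → ℝ) : Matrix (Fin p) (Fin p) ℝ :=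
  fun i j => if i.val = p - 1 then a (p - 1 - j.val) else if j.val = i.val + 1 then 1 else 0

lemma comp_row_sum (p : ℕ) (a : ℕ → ℝ) (v : Fin p → ℝ) (i : Fin p) (hi : i.val < p - 1) :
    ∑ j, companion p a i j * v j = v ⟨i.val + 1, by omega⟩ := by
  rw [Finset.sum_eq_single (⟨i.val + 1, by omega⟩ : Fin p)]
  · simp [companion, show ¬ i.val = p - 1 by omega]
  · intro j _ hj
    have : ¬ (j.val = i.val + 1) := by
      intro h; apply hj; exact Fin.ext h
    simp [companion, show ¬ i.val = p - 1 by omega, this]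
  · simp

lemma comp_last_sum (p : ℕ) (hp : 0 < p) (a : ℕ → ℝ) (v : Fin p → ℝ) :
    ∑ j, companion p a ⟨p - 1, Nat.sub_lt hp Nat.one_pos⟩ j * v j = ∑ j, a (p - 1 - j.val) * v j := by
  simp [companion]

lemma one_sub_row (p : ℕ) (a : ℕ → ℝ) (v : Fin p → ℝ) (i : Fin p) :
    ∑ j, (1 - companion p a) i j * v j = v i - ∑ j, companion p a i j * v j := by
  simp only [Matrix.sub_apply, sub_mul, Finset.sum_sub_distrib]
  congr 1
  rw [Finset.sum_eq_single i]
  · simp [Matrix.one_apply]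
  · intro j _ hj; simp [Matrix.one_apply, (Ne.symm hj)]
  · simp

/-- constant kernel-type propagation: if `w i = w ⟨i+1⟩` for all `i < p-1`,
then every entry equals the last one. -/
lemma const_of_step (p : ℕ) (hp : 0 < p) (w : Fin p → ℝ)
    (h : ∀ i : Fin p, (hi : i.val < p - 1) → w i = w ⟨i.val + 1, by omega⟩) :
    ∀ i : Fin p, w i = w ⟨p - 1, Nat.sub_lt hp Nat.one_pos⟩ := by
  have key : ∀ n : ℕ, w ⟨p - 1 - n, by omega⟩ = w ⟨p - 1, Nat.sub_lt hp Nat.one_pos⟩ := by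
    intro n
    induction n with
    | zero => rfl
    | succ k ih =>
      by_cases hk : k + 1 ≤ p - 1
      · have h1 : p - 1 - (k + 1) < p - 1 := by omega
        rw [h ⟨p - 1 - (k+1), by omega⟩ h1]
        have : (⟨p - 1 - (k+1) + 1, by omega⟩ : Fin p) = ⟨p - 1 - k, by omega⟩ := by
          apply Fin.ext; simp; omega
        rw [this]; exact ih
      · have : (⟨p - 1 - (k+1), by omega⟩ : Fin p) = ⟨p - 1 - k, by omega⟩ := by
          apply Fin.ext; simp; omega
        rw [this]; exact ih
  intro i
  have : i = ⟨p - 1 - (p - 1 - i.val), by omega⟩ := by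
    apply Fin.ext; simp; omega
  rw [this]; exact key (p - 1 - i.val)

lemma det_ne (p : ℕ) (hp : 0 < p) (a : ℕ → ℝ)
    (hroot : ∀ z : ℂ,
      z ^ p - ∑ k ∈ Finset.range p, (a k : ℂ) * z ^ (p - 1 - k) = 0 → ‖z‖ < 1) :
    (1 - companion p a).det ≠ 0 := by
  intro hdet
  obtain ⟨v, hv, hmv⟩ := (Matrix.exists_mulVec_eq_zero_iff).2 hdet
  -- rows i < p-1 : v i = v (i+1)
  have hstep : ∀ i : Fin p, (hi : i.val < p - 1) → v i = v ⟨i.val + 1, by omega⟩ := by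
    intro i hi
    have := congrFun hmv i
    rw [Matrix.mulVec, dotProduct] at this
    rw [one_sub_row, comp_row_sum p a v i hi, Pi.zero_apply] at this
    linarith
  have hconst := const_of_step p hp v hstep
  set c := v ⟨p - 1, Nat.sub_lt hp Nat.one_pos⟩ with hc
  have hcne : c ≠ 0 := by
    intro h0
    apply hv
    funext i
    rw [hconst i, h0]; rfl
  -- last row
  have hlast := congrFun hmv ⟨p - 1, Nat.sub_lt hp Nat.one_pos⟩
  rw [Matrix.mulVec, dotProduct, one_sub_row, comp_last_sum p hp a v,
    Pi.zero_apply] at hlast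
  have hsum : ∑ j : Fin p, a (p - 1 - j.val) * v j = c * ∑ j : Fin p, a (p - 1 - j.val) := by
    rw [Finset.mul_sum]
    exact Finset.sum_congr rfl fun j _ => by rw [hconst j, mul_comm]
  rw [hsum] at hlast
  have hsum1 : ∑ j : Fin p, a (p - 1 - j.val) = 1 := by
    have : c * (1 - ∑ j : Fin p, a (p - 1 - j.val)) = 0 := by linear_combination hlast
    rcases mul_eq_zero.1 this with h | h
    · exact absurd h hcne
    · linarith
  have hsum2 : ∑ k ∈ Finset.range p, a k = 1 := by
    rw [← Finset.sum_range_reflect]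
    rw [Fin.sum_univ_eq_sum_range (fun j => a (p - 1 - j)) p] at hsum1
    exact hsum1
  have := hroot 1 (by
    have hc2 : (∑ k ∈ Finset.range p, (a k : ℂ) * 1 ^ (p - 1 - k))
        = ((∑ k ∈ Finset.range p, a k : ℝ) : ℂ) := by
      push_cast; simp
    rw [one_pow, hc2, hsum2]; norm_num)
  simp at this

/-- If all roots of `z^p - Σ_{k=1}^p a_k z^{p-k}` lie strictly inside the unit
circle (so that `I - A` is invertible), then `e_p^T (I - A)⁻¹ e_p ≠ 0`. -/
theorem stmt1 (p : ℕ) (hp : 0 < p) (a : ℕ → ℝ)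
    (hroot : ∀ z : ℂ,
      z ^ p - ∑ k ∈ Finset.range p, (a k : ℂ) * z ^ (p - 1 - k) = 0 → ‖z‖ < 1) :
    ((1 - companion p a)⁻¹) ⟨p - 1, by omega⟩ ⟨p - 1, by omega⟩ ≠ 0 := by
  intro hzero
  have hdet := det_ne p hp a hroot
  have hinv : (1 - companion p a) * (1 - companion p a)⁻¹ = 1 :=
    Matrix.mul_nonsing_inv _ (isUnit_iff_ne_zero.2 hdet)
  set B := (1 - companion p a)⁻¹ with hB
  set last : Fin p := ⟨p - 1, by omega⟩ with hlastdef
  -- v j = B j last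
  set v : Fin p → ℝ := fun j => B j last with hv
  -- from rows i < p - 1 of the identity : v i = v (i+1)
  have hstep : ∀ i : Fin p, (hi : i.val < p - 1) → v i = v ⟨i.val + 1, by omega⟩ := by
    intro i hi
    have := congrFun (congrFun hinv i) last
    rw [Matrix.mul_apply] at this
    rw [one_sub_row p a v i] at this
    rw [comp_row_sum p a v i hi] at this
    have hne : i ≠ last := by
      intro h; rw [h] at hi; simp [hlastdef] at hi
    rw [Matrix.one_apply_ne hne] at this
    linarith [this]
  have hconst := const_of_step p hp v hstep
  have hall : ∀ i, v i = 0 := by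
    intro i; rw [hconst i]; exact hzero
  -- last row of identity gives contradiction
  have hlast := congrFun (congrFun hinv last) last
  rw [Matrix.mul_apply, one_sub_row p a v last] at hlast
  rw [Matrix.one_apply_eq] at hlast
  have : (0 : ℝ) = 1 := by
    rw [← hlast, hall last]
    have : ∑ j, companion p a last j * v j = 0 := by
      apply Finset.sum_eq_zero; intro j _; rw [hall j, mul_zero]
    rw [this]; ring
  norm_num at this
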